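/- Let γ ≥ 1 be a real number, let r ≥ 2 be an integer with r ≥ γ, and set k = ⌈log r⌉ (natural logarithm). Define ζ_i = (k − i)/k for i ∈ {1, …, k−1} and ζ_k = γ/r, and let σ : [k] → [k] be the cyclic permutation σ(i) = i + 1 for i < k and σ(k) = 1. Then for every tuple (i_1, …, i_r) ∈ [k]^r there exists l ∈ [k] such that ∏_{j=1}^r ζ_{σ^l(i_j)} ≥ e^{-2r}, where σ^l denotes σ composed with itself l times. -/

import Mathlib

open Finset

/-- Cyclic shift product over a full period: shifting by `b` mod `k` doesn't change
the product over `range k`. -/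
lemma prod_range_mod {M : Type*} [CommMonoid M] (h : ℕ → M) (k b : ℕ) (hk : 0 < k) :
    ∏ l ∈ Finset.range k, h ((b + l) % k) = ∏ l ∈ Finset.range k, h l := by
  obtain ⟨n, rfl⟩ : ∃ n, k = n + 1 := ⟨k - 1, by omega⟩
  rw [← Fin.prod_univ_eq_prod_range (fun l => h ((b + l) % (n + 1))),
    ← Fin.prod_univ_eq_prod_range (fun l => h l)]
  have key := Equiv.prod_comp (Equiv.addLeft (Fin.ofNat (n + 1) b))
      (fun l : Fin (n + 1) => h l.val)
  rw [← key]
  apply Fintype.prod_congr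
  intro l
  simp only [Equiv.coe_addLeft, Fin.add_def, Fin.val_natCast, Fin.val_ofNat, Nat.mod_add_mod]

/-- Explicit formula for iterates of the cyclic shift. -/
lemma sigma_iterate (k : ℕ) (hk : 0 < k) (σ : ℕ → ℕ)
    (hσ : ∀ i : ℕ, 1 ≤ i → i ≤ k - 1 → σ i = i + 1) (hσk : σ k = 1) :
    ∀ l a, a < k → σ^[l] (a + 1) = (a + l) % k + 1 := by
  intro l
  induction l with
  | zero => intro a ha; simp [Nat.mod_eq_of_lt ha]
  | succ l ih =>
    intro a ha
    rw [Function.iterate_succ_apply', ih a ha]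
    set b := (a + l) % k with hb
    have hbk : b < k := Nat.mod_lt _ hk
    have hmod : (a + (l + 1)) % k = (b + 1) % k := by
      rw [hb, Nat.mod_add_mod, ← Nat.add_assoc]
    rw [hmod]
    rcases eq_or_lt_of_le (Nat.succ_le_of_lt hbk) with hcase | hcase
    · -- b + 1 = k
      have hbk' : b + 1 = k := hcase
      rw [hbk', hσk, Nat.mod_self]
    · -- b + 1 < k
      rw [hσ (b + 1) (by omega) (by omega), Nat.mod_eq_of_lt hcase]

theorem good_cell_in_orbit
    (γ : ℝ) (hγ : 1 ≤ γ) (r : ℕ) (hr : 2 ≤ r) (hγr : γ ≤ r)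
    (k : ℕ) (hk : k = ⌈Real.log r⌉₊)
    (ζ : ℕ → ℝ) (hζ : ∀ i : ℕ, 1 ≤ i → i ≤ k - 1 → ζ i = ((k : ℝ) - i) / k)
    (hζk : ζ k = γ / r)
    (σ : ℕ → ℕ) (hσ : ∀ i : ℕ, 1 ≤ i → i ≤ k - 1 → σ i = i + 1) (hσk : σ k = 1)
    (ι : Fin r → ℕ) (hι : ∀ j, ι j ∈ Finset.Icc 1 k) :
    ∃ l ∈ Finset.Icc 1 k, Real.exp (-2 * r) ≤ ∏ j : Fin r, ζ (σ^[l] (ι j)) := by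
  have hr1 : (1 : ℝ) < (r : ℝ) := by exact_mod_cast hr.trans_lt' one_lt_two
  have hrpos : (0 : ℝ) < r := by linarith
  have hkpos : 0 < k := by
    rw [hk]
    exact Nat.ceil_pos.mpr (Real.log_pos hr1)
  have hkR : (0 : ℝ) < (k : ℝ) := by exact_mod_cast hkpos
  -- positivity of ζ on [1, k]
  have hζpos : ∀ i ∈ Finset.Icc 1 k, 0 < ζ i := by
    intro i hi
    rw [Finset.mem_Icc] at hi
    rcases eq_or_lt_of_le hi.2 with h | h
    · rw [h, hζk]
      positivity
    · rw [hζ i hi.1 (by omega)]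
      have : (i : ℝ) < (k : ℝ) := by exact_mod_cast h
      apply div_pos (by linarith) hkR
  -- σ iterates stay in [1, k]
  have hσmem : ∀ l x, x ∈ Finset.Icc 1 k → σ^[l] x ∈ Finset.Icc 1 k := by
    intro l x hx
    rw [Finset.mem_Icc] at hx
    obtain ⟨a, rfl⟩ : ∃ a, x = a + 1 := ⟨x - 1, by omega⟩
    rw [sigma_iterate k hkpos σ hσ hσk l a (by omega)]
    have := Nat.mod_lt (a + l) hkpos
    rw [Finset.mem_Icc]
    omega
  set Q : ℝ := ∏ i ∈ Finset.Icc 1 k, ζ i with hQ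
  have hQpos : 0 < Q := Finset.prod_pos hζpos
  -- orbit product lemma
  have horbit : ∀ x ∈ Finset.Icc 1 k,
      ∏ l ∈ Finset.Icc 1 k, ζ (σ^[l] x) = Q := by
    intro x hx
    rw [Finset.mem_Icc] at hx
    obtain ⟨a, rfl⟩ : ∃ a, x = a + 1 := ⟨x - 1, by omega⟩
    have ha : a < k := by omega
    rw [hQ, ← Finset.Ico_add_one_right_eq_Icc 1 k,
      Finset.prod_Ico_eq_prod_range, Finset.prod_Ico_eq_prod_range]
    simp only [Nat.add_sub_cancel]
    calc ∏ l ∈ Finset.range k, ζ (σ^[1 + l] (a + 1))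
        = ∏ l ∈ Finset.range k, ζ ((a + 1 + l) % k + 1) := by
          apply Finset.prod_congr rfl
          intro l _
          rw [sigma_iterate k hkpos σ hσ hσk (1 + l) a ha]
          ring_nf
      _ = ∏ l ∈ Finset.range k, ζ (l + 1) := by
          exact prod_range_mod (fun m => ζ (m + 1)) k (a + 1) hkpos
      _ = ∏ l ∈ Finset.range k, ζ (1 + l) := by
          apply Finset.prod_congr rfl; intro l _; rw [Nat.add_comm]
  -- the full product over l
  set P : ℕ → ℝ := fun l => ∏ j : Fin r, ζ (σ^[l] (ι j)) with hP
  have hPnonneg : ∀ l, 0 ≤ P l := by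
    intro l
    apply Finset.prod_nonneg
    intro j _
    exact (hζpos _ (hσmem l (ι j) (hι j))).le
  have hprodP : ∏ l ∈ Finset.Icc 1 k, P l = Q ^ r := by
    rw [hP]
    rw [Finset.prod_comm]
    have : ∀ j : Fin r, ∏ l ∈ Finset.Icc 1 k, ζ (σ^[l] (ι j)) = Q :=
      fun j => horbit (ι j) (hι j)
    rw [Finset.prod_congr rfl (fun j _ => this j), Finset.prod_const,
      Finset.card_univ, Fintype.card_fin]
  -- pick a maximizing l
  obtain ⟨l, hlmem, hlmax⟩ := Finset.exists_max_image (Finset.Icc 1 k) P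
    ⟨1, Finset.mem_Icc.mpr ⟨le_refl 1, hkpos⟩⟩
  refine ⟨l, hlmem, ?_⟩
  have hcard : (Finset.Icc 1 k).card = k := by rw [Nat.card_Icc]; omega
  have hQrk : Q ^ r ≤ P l ^ k := by
    calc Q ^ r = ∏ l' ∈ Finset.Icc 1 k, P l' := hprodP.symm
      _ ≤ ∏ _l' ∈ Finset.Icc 1 k, P l := by
          apply Finset.prod_le_prod (fun i _ => hPnonneg i) (fun i hi => hlmax i hi)
      _ = P l ^ k := by rw [Finset.prod_const, hcard]
  -- lower bound on Q : Q ≥ exp (-2k)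
  have hlogr : Real.log r ≤ k := by
    rw [hk]; exact Nat.le_ceil _
  have hrek : (r : ℝ) ≤ Real.exp k := by
    calc (r : ℝ) = Real.exp (Real.log r) := (Real.exp_log hrpos).symm
      _ ≤ Real.exp k := Real.exp_le_exp.mpr hlogr
  have hB : Real.exp (-(k : ℝ)) ≤ ζ k := by
    rw [hζk, Real.exp_neg]
    calc (Real.exp (k : ℝ))⁻¹ ≤ (r : ℝ)⁻¹ := by gcongr
      _ = 1 / r := (one_div _).symm
      _ ≤ γ / r := by gcongr
  -- factorial bound : exp (-k) ≤ (k-1)! / k^(k-1)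
  have hfact : (k : ℝ) ^ k / (Nat.factorial k) ≤ Real.exp k := by
    have h1 : (k : ℝ) ^ k / (Nat.factorial k) ≤
        ∑ i ∈ Finset.range (k + 1), (k : ℝ) ^ i / (Nat.factorial i) := by
      apply Finset.single_le_sum (f := fun i => (k : ℝ) ^ i / (Nat.factorial i))
      · intro i _; positivity
      · exact Finset.self_mem_range_succ k
    exact h1.trans (Real.sum_le_exp_of_nonneg hkR.le (k + 1))
  have hA : Real.exp (-(k : ℝ)) ≤ ∏ i ∈ Finset.Icc 1 (k - 1), ζ i := by
    have heq : ∏ i ∈ Finset.Icc 1 (k - 1), ζ i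
        = (Nat.factorial (k - 1) : ℝ) / (k : ℝ) ^ (k - 1) := by
      calc ∏ i ∈ Finset.Icc 1 (k - 1), ζ i
          = ∏ i ∈ Finset.Icc 1 (k - 1), ((k : ℝ) - i) / k := by
            apply Finset.prod_congr rfl
            intro i hi
            rw [Finset.mem_Icc] at hi
            exact hζ i hi.1 hi.2
        _ = ∏ i ∈ Finset.Icc 1 (k - 1), ((i : ℝ) / k) := by
            apply Finset.prod_nbij' (fun i => k - i) (fun i => k - i)
            · intro i hi; rw [Finset.mem_Icc] at *; omega
            · intro i hi; rw [Finset.mem_Icc] at *; omega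
            · intro i hi; rw [Finset.mem_Icc] at hi; omega
            · intro i hi; rw [Finset.mem_Icc] at hi; omega
            · intro i hi
              rw [Finset.mem_Icc] at hi
              have : ((k - i : ℕ) : ℝ) = (k : ℝ) - i := by
                have : i ≤ k := by omega
                push_cast [this]; ring
              rw [this]
        _ = (∏ i ∈ Finset.Icc 1 (k - 1), (i : ℝ)) / (k : ℝ) ^ (k - 1) := by
            rw [Finset.prod_div_distrib, Finset.prod_const, Nat.card_Icc]
            norm_num
        _ = (Nat.factorial (k - 1) : ℝ) / (k : ℝ) ^ (k - 1) := by
            congr 1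
            rw [← Nat.cast_prod]
            congr 1
            rw [← Finset.Ico_add_one_right_eq_Icc]
            exact Finset.prod_Ico_id_eq_factorial (k - 1)
    rw [heq]
    have hfk : (0 : ℝ) < (Nat.factorial k : ℝ) := by exact_mod_cast Nat.factorial_pos k
    have hfk1 : (0 : ℝ) < (Nat.factorial (k - 1) : ℝ) := by
      exact_mod_cast Nat.factorial_pos (k - 1)
    rw [Real.exp_neg, inv_le_iff_one_le_mul₀ (Real.exp_pos _)]
    -- k^(k-1) ≤ (k-1)! * exp k
    have hkk : (k : ℝ) ^ k = (k : ℝ) * (k : ℝ) ^ (k - 1) := by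
      rw [← pow_succ']
      congr 1
      omega
    have hkf : (Nat.factorial k : ℝ) = (k : ℝ) * (Nat.factorial (k - 1) : ℝ) := by
      have : k = (k - 1) + 1 := by omega
      rw [this, Nat.factorial_succ]
      push_cast
      congr 2 <;> omega
    have hpow : (k : ℝ) ^ (k - 1) ≤ (Nat.factorial (k - 1) : ℝ) * Real.exp k := by
      have h2 : (k : ℝ) ^ k ≤ (Nat.factorial k : ℝ) * Real.exp k := by
        rw [div_le_iff₀ hfk] at hfact
        linarith [hfact]
      rw [hkk, hkf] at h2
      nlinarith [Real.exp_pos (k : ℝ), hfk1]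
    calc (1 : ℝ) = ((k : ℝ) ^ (k - 1)) / ((k : ℝ) ^ (k - 1)) := by
          field_simp
      _ ≤ ((Nat.factorial (k - 1) : ℝ) * Real.exp k) / ((k : ℝ) ^ (k - 1)) := by
          gcongr
      _ = (Nat.factorial (k - 1) : ℝ) / (k : ℝ) ^ (k - 1) * Real.exp k := by
          ring
  -- combine : exp(-2k) ≤ Q
  have hQsplit : Q = (∏ i ∈ Finset.Icc 1 (k - 1), ζ i) * ζ k := by
    rw [hQ]
    have : k = (k - 1) + 1 := by omega
    rw [this, Finset.prod_Icc_succ_top (by omega) ζ]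
    rw [← this]
  have hQlb : Real.exp (-2 * k) ≤ Q := by
    rw [hQsplit]
    have : Real.exp (-2 * k) = Real.exp (-(k : ℝ)) * Real.exp (-(k : ℝ)) := by
      rw [← Real.exp_add]; ring_nf
    rw [this]
    exact mul_le_mul hA hB (Real.exp_pos _).le
      (Finset.prod_nonneg fun i hi => (hζpos i (by rw [Finset.mem_Icc] at *; constructor <;> omega)).le)
  -- finish : exp(-2r) ≤ P l
  have hfinal : Real.exp (-2 * r) ^ k ≤ P l ^ k := by
    calc Real.exp (-2 * r) ^ k = Real.exp (-2 * k) ^ r := by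
          rw [← Real.exp_nat_mul, ← Real.exp_nat_mul]
          ring_nf
      _ ≤ Q ^ r := pow_le_pow_left₀ (Real.exp_pos _).le hQlb r
      _ ≤ P l ^ k := hQrk
  exact le_of_pow_le_pow_left₀ (by omega) (hPnonneg l) hfinal
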